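/- Let G be a finite simple graph with minimum degree δ, maximum degree Δ, and girth at least 5. If δ > log_2(e·(Δ² − Δ + 1)), where e is Euler's number, then χ_σ^t(G) ≤ 2: for every linear order on the disjoint union V(G) ∪ E(G) there exists a total weighting w : V(G) ∪ E(G) → {1,2} whose induced total sequence colouring of the vertices is proper. -/

import Mathlib

/-!
Common definitions: total sequence colourings induced by a total weighting and a linear
order on the disjoint union `V(G) ⊕ E(G)` of a finite simple graph.
-/

open Finset

variable {V : Type*}

/-- The elements of `V(G) ⊕ E(G)` relevant to the vertex `v` (namely `v` itself together
with the edges incident to `v`), sorted in increasing order with respect to the linear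
order `σ` on `V(G) ⊕ E(G)`. -/
noncomputable def incTotal [Fintype V] [DecidableEq V] (G : SimpleGraph V) [DecidableRel G.Adj]
    (σ : LinearOrder (V ⊕ G.edgeSet)) (v : V) : List (V ⊕ G.edgeSet) :=
  letI := σ
  letI : DecidablePred (fun x : V ⊕ G.edgeSet =>
      Sum.elim (fun u : V => u = v) (fun e : G.edgeSet => v ∈ (e : Sym2 V)) x) :=
    Classical.decPred _
  ((Finset.univ : Finset (V ⊕ G.edgeSet)).filter
    (fun x : V ⊕ G.edgeSet =>
      Sum.elim (fun u : V => u = v) (fun e : G.edgeSet => v ∈ (e : Sym2 V)) x)).sort σ.le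

/-- The induced total sequence colouring: `c(v)` consists of `w(v)` together with the
weights `w(e)` of the edges `e` incident to `v`, all written in increasing order with
respect to `σ`. -/
noncomputable def totalSeqColor [Fintype V] [DecidableEq V] (G : SimpleGraph V)
    [DecidableRel G.Adj] (σ : LinearOrder (V ⊕ G.edgeSet)) (w : V ⊕ G.edgeSet → ℝ) (v : V) :
    List ℝ :=
  (incTotal G σ v).map w

/-- The induced total sequence colouring is proper: adjacent vertices receive distinct
sequences. -/
def ProperTotalSeq [Fintype V] [DecidableEq V] (G : SimpleGraph V) [DecidableRel G.Adj]
    (σ : LinearOrder (V ⊕ G.edgeSet)) (w : V ⊕ G.edgeSet → ℝ) : Prop :=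
  ∀ u v : V, G.Adj u v → totalSeqColor G σ w u ≠ totalSeqColor G σ w v

-- helpers
lemma wt_inj' {a b : Bool} (h : (if a then (2:ℝ) else 1) = (if b then (2:ℝ) else 1)) : a = b := by
  cases a <;> cases b <;> simp_all <;> norm_num at h

lemma mem_finset_inf {ι Ω : Type*} [DecidableEq ι] [DecidableEq Ω] [Fintype Ω]
    (S : Finset ι) (F : ι → Finset Ω) (g : Ω) :
    g ∈ S.inf F ↔ ∀ j ∈ S, g ∈ F j := by
  refine Finset.induction_on S ?_ ?_
  · simp
  · intro a s ha ih
    simp [Finset.inf_insert, Finset.mem_inter, ih]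

lemma mem_incTotal [Fintype V] [DecidableEq V] (G : SimpleGraph V) [DecidableRel G.Adj]
    (σ : LinearOrder (V ⊕ G.edgeSet)) {x : V ⊕ G.edgeSet} {z : V} :
    x ∈ incTotal G σ z ↔
      Sum.elim (fun u : V => u = z) (fun e : G.edgeSet => z ∈ (e : Sym2 V)) x := by
  letI := σ
  letI : DecidablePred (fun x : V ⊕ G.edgeSet =>
      Sum.elim (fun u : V => u = z) (fun e : G.edgeSet => z ∈ (e : Sym2 V)) x) :=
    Classical.decPred _
  unfold incTotal
  rw [Finset.mem_sort, Finset.mem_filter]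
  simp

example : True := trivial

section LLL
variable {Ω ι : Type*} [Fintype Ω] [DecidableEq Ω] [Fintype ι] [DecidableEq ι] [Nonempty Ω]

/-- Counting version of the (lopsided) Lovász Local Lemma. -/
theorem counting_LLL (A : ι → Finset Ω) (Γ : ι → Finset ι) (hmem : ∀ i, i ∈ Γ i)
    (D : ℕ) (hD : 1 ≤ D) (hΓ : ∀ i, (Γ i).card ≤ D + 1)
    (p : ℝ) (hp : 0 ≤ p) (hpe : Real.exp 1 * p * (D + 1) ≤ 1)
    (hcond : ∀ i (S : Finset ι), Disjoint S (Γ i) →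
      ((A i ∩ (S.inf fun j => (A j)ᶜ)).card : ℝ)
        ≤ p * ((S.inf fun j => (A j)ᶜ).card)) :
    ∃ f : Ω, ∀ i, f ∉ A i := by
  set x : ℝ := 1 / (D + 1) with hx
  set N : Finset ι → Finset Ω := fun S => S.inf fun j => (A j)ᶜ with hN
  have hxpos : 0 < x := by positivity
  have hx1 : x < 1 := by
    rw [hx, div_lt_one (by positivity)]
    have : (1:ℝ) ≤ D := by exact_mod_cast hD
    linarith
  have hone_sub : (0:ℝ) < 1 - x := by linarith
  have hpow : Real.exp (-1) ≤ (1 - x) ^ D := by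
    have hD0 : (0:ℝ) < D := by exact_mod_cast hD
    have h1 : Real.exp (1 / D) ≥ 1 + 1 / D := by
      have := Real.add_one_le_exp (1 / (D:ℝ)); linarith
    have h2 : Real.exp (-(1 / (D:ℝ))) ≤ 1 - x := by
      rw [Real.exp_neg, inv_le_comm₀ (Real.exp_pos _) (by linarith)]
      calc (1 - x)⁻¹ = 1 + 1 / ((D:ℝ)) := by rw [hx]; field_simp; rw [add_sub_cancel_right, div_self hD0.ne']
          _ ≤ Real.exp (1 / D) := h1
    calc Real.exp (-1) = Real.exp (-(1/(D:ℝ))) ^ D := by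
          rw [← Real.exp_nat_mul]; congr 1; field_simp
        _ ≤ (1 - x) ^ D := pow_le_pow_left₀ (Real.exp_pos _).le h2 D
  have hpx : p ≤ x * (1 - x) ^ D := by
    have he : (0:ℝ) < Real.exp 1 := Real.exp_pos 1
    have hD1 : (0:ℝ) < (D:ℝ) + 1 := by positivity
    have h1 : p ≤ 1 / (Real.exp 1 * ((D:ℝ) + 1)) := by
      rw [le_div_iff₀ (by positivity)]; nlinarith
    calc p ≤ 1 / (Real.exp 1 * ((D:ℝ) + 1)) := h1
      _ = x * Real.exp (-1) := by rw [Real.exp_neg, hx]; field_simp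
      _ ≤ x * (1 - x) ^ D := by nlinarith
  have hNanti : ∀ {S T : Finset ι}, S ⊆ T → N T ⊆ N S := by
    intro S T h
    show (T.inf fun j => (A j)ᶜ) ≤ (S.inf fun j => (A j)ᶜ)
    exact Finset.inf_mono h
  have hcardsplit : ∀ (i : ι) (S : Finset ι), i ∉ S →
      ((N (insert i S)).card : ℝ) = (N S).card - ((A i ∩ N S).card : ℝ) := by
    intro i S hi
    have h1 : N (insert i S) = N S \ A i := by
      rw [hN]; simp only [inf_insert]
      ext g; simp [mem_sdiff, And.comm]
    have h2 : A i ∩ N S = N S ∩ A i := Finset.inter_comm _ _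
    rw [h1, h2]
    have h3 := Finset.card_sdiff_add_card_inter (N S) (A i)
    have h4 : ((N S \ A i).card : ℝ) + ((N S ∩ A i).card : ℝ) = ((N S).card : ℝ) := by
      exact_mod_cast h3
    linarith
  have key : ∀ S : Finset ι, ∀ i, i ∉ S → ((A i ∩ N S).card : ℝ) ≤ x * (N S).card := by
    intro S
    induction S using Finset.strongInduction with
    | _ S ih =>
      intro i hi
      set S₂ : Finset ι := S \ Γ i with hS₂
      have hdisj : Disjoint S₂ (Γ i) := sdiff_disjoint
      have hstep1 : ((A i ∩ N S).card : ℝ) ≤ p * (N S₂).card := by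
        calc ((A i ∩ N S).card : ℝ) ≤ ((A i ∩ N S₂).card : ℝ) := by
              exact_mod_cast Finset.card_le_card
                (Finset.inter_subset_inter le_rfl (hNanti sdiff_subset))
          _ ≤ p * (N S₂).card := hcond i S₂ hdisj
      have hlow : ∀ T : Finset ι, T ⊆ S ∩ Γ i →
          (1 - x) ^ T.card * ((N S₂).card : ℝ) ≤ (N (S₂ ∪ T)).card := by
        intro T
        refine Finset.induction_on T ?_ ?_
        · intro _; simp
        · intro a T' ha ihT hsub
          have hsub' : T' ⊆ S ∩ Γ i := (Finset.subset_insert a T').trans hsub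
          have haS : a ∈ S ∩ Γ i := hsub (Finset.mem_insert_self a T')
          have haS2 : a ∉ S₂ ∪ T' := by
            simp only [Finset.mem_union, not_or]
            refine ⟨?_, ha⟩
            rw [hS₂]; simp only [Finset.mem_sdiff, not_and, not_not]
            intro _; exact (Finset.mem_inter.mp haS).2
          have hproper : S₂ ∪ T' ⊂ S := by
            apply Finset.ssubset_iff_of_subset ?_ |>.mpr
            · exact ⟨a, (Finset.mem_inter.mp haS).1, haS2⟩
            · exact Finset.union_subset sdiff_subset (hsub'.trans Finset.inter_subset_left)
          have hIH := ih (S₂ ∪ T') hproper a haS2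
          have hins : insert a (S₂ ∪ T') = S₂ ∪ insert a T' := by
            rw [Finset.union_insert]
          have hcard := hcardsplit a (S₂ ∪ T') haS2
          rw [hins] at hcard
          have hT'card := ihT hsub'
          have hNn : (0:ℝ) ≤ ((N (S₂ ∪ T')).card : ℝ) := by positivity
          rw [Finset.card_insert_of_notMem ha]
          calc (1 - x) ^ (T'.card + 1) * ((N S₂).card : ℝ)
              = (1 - x) * ((1 - x) ^ T'.card * (N S₂).card) := by ring
            _ ≤ (1 - x) * (N (S₂ ∪ T')).card := by nlinarith
            _ ≤ (N (S₂ ∪ insert a T')).card := by rw [hcard]; nlinarith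
      have hcover : S₂ ∪ (S ∩ Γ i) = S := by
        rw [hS₂, Finset.sdiff_union_inter]
      have hcardΓ : (S ∩ Γ i).card ≤ D := by
        have h1 : S ∩ Γ i ⊆ Γ i \ {i} := by
          intro a hamem
          simp only [Finset.mem_sdiff, Finset.mem_singleton]
          refine ⟨(Finset.mem_inter.mp hamem).2, ?_⟩
          rintro rfl
          exact hi (Finset.mem_inter.mp hamem).1
        calc (S ∩ Γ i).card ≤ (Γ i \ {i}).card := Finset.card_le_card h1
          _ = (Γ i).card - 1 := by
              rw [Finset.sdiff_singleton_eq_erase, Finset.card_erase_of_mem (hmem i)]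
          _ ≤ D := by have := hΓ i; omega
      have hmain := hlow (S ∩ Γ i) le_rfl
      rw [hcover] at hmain
      have hpowle : (1 - x) ^ D ≤ (1 - x) ^ (S ∩ Γ i).card := by
        exact pow_le_pow_of_le_one hone_sub.le (by linarith) hcardΓ
      have hNS2 : (0:ℝ) ≤ ((N S₂).card : ℝ) := by positivity
      have hmul1 := mul_le_mul_of_nonneg_right hpx hNS2
      have hmul2 := mul_le_mul_of_nonneg_right hpowle hNS2
      calc ((A i ∩ N S).card : ℝ) ≤ p * (N S₂).card := hstep1
        _ ≤ x * ((1 - x) ^ D * (N S₂).card) := by nlinarith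
        _ ≤ x * ((1 - x) ^ (S ∩ Γ i).card * (N S₂).card) := by nlinarith
        _ ≤ x * (N S).card := by nlinarith
  have hfinal : ∀ S : Finset ι, (1 - x) ^ S.card * (Fintype.card Ω : ℝ) ≤ (N S).card := by
    intro S
    refine Finset.induction_on S ?_ ?_
    · simp [hN]
    · intro i S hi ihS
      have hcard := hcardsplit i S hi
      have hkey := key S i hi
      rw [Finset.card_insert_of_notMem hi]
      have hc : (0:ℝ) ≤ (Fintype.card Ω : ℝ) := by positivity
      calc (1 - x) ^ (S.card + 1) * (Fintype.card Ω : ℝ)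
          = (1 - x) * ((1 - x) ^ S.card * (Fintype.card Ω : ℝ)) := by ring
        _ ≤ (1 - x) * (N S).card := by nlinarith
        _ ≤ (N (insert i S)).card := by rw [hcard]; nlinarith
  have hpos : (0:ℝ) < ((N Finset.univ).card : ℝ) := by
    have h0 : (0:ℝ) < (Fintype.card Ω : ℝ) := by exact_mod_cast Fintype.card_pos
    have h1 := hfinal Finset.univ
    have h2 : (0:ℝ) < (1 - x) ^ (Finset.univ : Finset ι).card * (Fintype.card Ω : ℝ) :=
      mul_pos (pow_pos hone_sub _) h0
    linarith
  have hne : (N Finset.univ).Nonempty := by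
    rw [← Finset.card_pos]
    exact_mod_cast hpos
  obtain ⟨f, hf⟩ := hne
  refine ⟨f, fun i => ?_⟩
  have hsub : N Finset.univ ⊆ (A i)ᶜ := Finset.inf_le (Finset.mem_univ i)
  have := hsub hf
  simpa using this
end LLL

theorem stmt_14'  [Fintype V] [DecidableEq V] (G : SimpleGraph V) [DecidableRel G.Adj]
    (hδ : Real.logb 2 (Real.exp 1 * ((G.maxDegree : ℝ) ^ 2 - (G.maxDegree : ℝ) + 1))
      < (G.minDegree : ℝ))
    (σ : LinearOrder (V ⊕ G.edgeSet)) :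
    ∃ w : V ⊕ G.edgeSet → ℝ, (∀ x, w x ∈ ({1, 2} : Set ℝ)) ∧
      ∀ a b : V, G.Adj a b → totalSeqColor G σ w a ≠ totalSeqColor G σ w b := by
  classical
  by_cases hV : Nonempty V
  case neg =>
    exact ⟨fun _ => 1, fun x => by simp, fun a b h => absurd ⟨a⟩ hV⟩
  obtain ⟨v₀⟩ := hV
  -- basic degree facts
  have hδΔ : G.minDegree ≤ G.maxDegree :=
    le_trans (G.minDegree_le_degree v₀) (G.degree_le_maxDegree v₀)
  -- Δ ≥ 2
  have hΔ2 : 2 ≤ G.maxDegree := by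
    by_contra hcon
    push_neg at hcon
    have h1 : ((G.maxDegree : ℝ) ^ 2 - (G.maxDegree : ℝ) + 1) = 1 := by
      interval_cases h : G.maxDegree <;> norm_num
    rw [h1, mul_one] at hδ
    have h2 : Real.logb 2 (Real.exp 1) = 1 / Real.log 2 := by
      rw [Real.logb, Real.log_exp]
    have h3 : Real.log 2 < 1 := by
      have := Real.log_two_lt_d9; linarith
    have h4 : 0 < Real.log 2 := Real.log_pos (by norm_num)
    have h5 : (1:ℝ) < 1 / Real.log 2 := by
      rw [lt_div_iff₀ h4]; linarith
    have h6 : (G.minDegree : ℝ) ≤ 1 := by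
      have : G.minDegree ≤ 1 := le_trans hδΔ (by omega)
      exact_mod_cast this
    rw [h2] at hδ
    linarith
  -- endpoints of edges
  have hrep : ∀ i : G.edgeSet, ∃ pr : V × V, G.Adj pr.1 pr.2 ∧ s(pr.1, pr.2) = (i : Sym2 V) := by
    rintro ⟨e, he⟩
    induction e using Sym2.ind with
    | _ x y => exact ⟨(x, y), G.mem_edgeSet.mp he, rfl⟩
  choose ep hepadj hepmk using hrep
  set eu : G.edgeSet → V := fun i => (ep i).1 with heu
  set ev : G.edgeSet → V := fun i => (ep i).2 with hev
  have hadj : ∀ i, G.Adj (eu i) (ev i) := hepadj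
  have hmk : ∀ i : G.edgeSet, s(eu i, ev i) = (i : Sym2 V) := hepmk
  have hne : ∀ i, eu i ≠ ev i := fun i => (hadj i).ne
  have humem : ∀ i : G.edgeSet, eu i ∈ (i : Sym2 V) := fun i => by
    rw [← hmk i]; exact Sym2.mem_mk_left _ _
  have hvmem : ∀ i : G.edgeSet, ev i ∈ (i : Sym2 V) := fun i => by
    rw [← hmk i]; exact Sym2.mem_mk_right _ _
  have hedge_eq : ∀ (j : G.edgeSet) (a b : V), a ∈ (j:Sym2 V) → b ∈ (j:Sym2 V) → a ≠ b →
      (j : Sym2 V) = s(a,b) :=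
    fun j a b ha hb hab => (Sym2.mem_and_mem_iff hab).mp ⟨ha, hb⟩
  -- the random structure
  set wt : ((V ⊕ G.edgeSet) → Bool) → (V ⊕ G.edgeSet) → ℝ :=
    fun f x => if f x then 2 else 1 with hwt
  set A : G.edgeSet → Finset ((V ⊕ G.edgeSet) → Bool) :=
    fun i => Finset.univ.filter
      (fun f => totalSeqColor G σ (wt f) (eu i) = totalSeqColor G σ (wt f) (ev i)) with hA
  set Γ : G.edgeSet → Finset G.edgeSet :=
    fun i => Finset.univ.filter
      (fun j => ∃ z, z ∈ (j : Sym2 V) ∧ (z = eu i ∨ (G.Adj (eu i) z ∧ z ≠ ev i))) with hΓdef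
  set P : G.edgeSet → Finset (V ⊕ G.edgeSet) :=
    fun i => insert (Sum.inl (eu i))
      (((Finset.univ.filter fun e : G.edgeSet => eu i ∈ (e : Sym2 V)).erase i).image Sum.inr)
    with hP
  have hPmem : ∀ (i : G.edgeSet) (x : V ⊕ G.edgeSet),
      x ∈ P i ↔ (x = Sum.inl (eu i) ∨
        ∃ e : G.edgeSet, x = Sum.inr e ∧ eu i ∈ (e : Sym2 V) ∧ e ≠ i) := by
    intro i x
    simp only [hP, Finset.mem_insert, Finset.mem_image, Finset.mem_erase, Finset.mem_filter,
      Finset.mem_univ, true_and]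
    constructor
    · rintro (h | ⟨e, ⟨hne', hmem'⟩, rfl⟩)
      · exact Or.inl h
      · exact Or.inr ⟨e, rfl, hmem', hne'⟩
    · rintro (h | ⟨e, rfl, hmem', hne'⟩)
      · exact Or.inl h
      · exact Or.inr ⟨e, ⟨hne', hmem'⟩, rfl⟩
  -- color congruence lemmas
  have hcongr : ∀ (f g : (V ⊕ G.edgeSet) → Bool) (z : V),
      (∀ x ∈ incTotal G σ z, f x = g x) →
      totalSeqColor G σ (wt f) z = totalSeqColor G σ (wt g) z := by
    intro f g z h
    exact List.map_congr_left fun x hx => by simp only [hwt]; rw [h x hx]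
  have hext : ∀ (f g : (V ⊕ G.edgeSet) → Bool) (z : V),
      totalSeqColor G σ (wt f) z = totalSeqColor G σ (wt g) z →
      ∀ x ∈ incTotal G σ z, f x = g x := by
    intro f g z h x hx
    have h2 := List.map_inj_left.mp h x hx
    exact wt_inj' h2
  -- vertex far from P i
  have hfarV : ∀ (i : G.edgeSet) (z : V), z ≠ eu i → ¬(G.Adj (eu i) z ∧ z ≠ ev i) →
      ∀ x ∈ incTotal G σ z, x ∉ P i := by
    intro i z hz1 hz2 x hx hxP
    rw [mem_incTotal] at hx
    rw [hPmem] at hxP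
    cases x with
    | inl wv =>
      simp only [Sum.elim_inl] at hx
      rcases hxP with h | ⟨e, he, _⟩
      · rw [Sum.inl.injEq] at h; exact hz1 (hx ▸ h)
      · exact absurd he (by simp)
    | inr e =>
      simp only [Sum.elim_inr] at hx
      rcases hxP with h | ⟨e', he', hmem', hne'⟩
      · exact absurd h (by simp)
      · rw [Sum.inr.injEq] at he'
        subst he'
        -- e contains z and eu i, e ≠ i
        by_cases hzu : z = eu i
        · exact hz1 hzu
        · have hes : (e : Sym2 V) = s(z, eu i) := hedge_eq e z (eu i) hx hmem' hzu
          have hadj' : G.Adj z (eu i) := by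
            rw [← G.mem_edgeSet, ← hes]; exact e.prop
          by_cases hzv : z = ev i
          · subst hzv
            have : (e : Sym2 V) = (i : Sym2 V) := by
              rw [hes, ← hmk i, Sym2.eq_swap]
            exact hne' (Subtype.ext this)
          · exact hz2 ⟨hadj'.symm, hzv⟩
  -- Claim B : membership in far events is invariant under changes on P i
  have hAinv : ∀ (i j : G.edgeSet), j ∉ Γ i → ∀ f g : (V ⊕ G.edgeSet) → Bool,
      (∀ x, x ∉ P i → f x = g x) → (f ∈ A j ↔ g ∈ A j) := by
    intro i j hj f g hfg
    have hfar : ∀ z, z ∈ (j : Sym2 V) → ∀ x ∈ incTotal G σ z, x ∉ P i := by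
      intro z hz
      have hj' : ¬(z = eu i ∨ (G.Adj (eu i) z ∧ z ≠ ev i)) := by
        simp only [hΓdef, Finset.mem_filter, Finset.mem_univ, true_and, not_exists] at hj
        exact fun h => (hj z) ⟨hz, h⟩
      push_neg at hj'
      exact hfarV i z hj'.1 (by tauto)
    have h1 : totalSeqColor G σ (wt f) (eu j) = totalSeqColor G σ (wt g) (eu j) :=
      hcongr f g (eu j) (fun x hx => hfg x (hfar (eu j) (humem j) x hx))
    have h2 : totalSeqColor G σ (wt f) (ev j) = totalSeqColor G σ (wt g) (ev j) :=
      hcongr f g (ev j) (fun x hx => hfg x (hfar (ev j) (hvmem j) x hx))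
    simp only [hA, Finset.mem_filter, Finset.mem_univ, true_and, h1, h2]
  -- Claim C : rigidity of A i under agreement off P i
  have hrigid : ∀ (i : G.edgeSet) (f g : (V ⊕ G.edgeSet) → Bool),
      f ∈ A i → g ∈ A i → (∀ x, x ∉ P i → f x = g x) → f = g := by
    intro i f g hfA hgA hfg
    have hvfar : ∀ x ∈ incTotal G σ (ev i), x ∉ P i := by
      intro x hx hxP
      rw [mem_incTotal] at hx
      rw [hPmem] at hxP
      cases x with
      | inl wv =>
        simp only [Sum.elim_inl] at hx
        rcases hxP with h | ⟨e, he, _⟩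
        · rw [Sum.inl.injEq] at h
          exact hne i ((hx ▸ h).symm)
        · exact absurd he (by simp)
      | inr e =>
        simp only [Sum.elim_inr] at hx
        rcases hxP with h | ⟨e', he', hmem', hne'⟩
        · exact absurd h (by simp)
        · rw [Sum.inr.injEq] at he'
          subst he'
          have hes : (e : Sym2 V) = s(ev i, eu i) :=
            hedge_eq e (ev i) (eu i) hx hmem' (fun h => hne i h.symm)
          have : (e : Sym2 V) = (i : Sym2 V) := by
            rw [hes, ← hmk i, Sym2.eq_swap]
          exact hne' (Subtype.ext this)
    have hcv : totalSeqColor G σ (wt f) (ev i) = totalSeqColor G σ (wt g) (ev i) :=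
      hcongr f g (ev i) (fun x hx => hfg x (hvfar x hx))
    simp only [hA, Finset.mem_filter, Finset.mem_univ, true_and] at hfA hgA
    have hcu : totalSeqColor G σ (wt f) (eu i) = totalSeqColor G σ (wt g) (eu i) := by
      rw [hfA, hgA, hcv]
    have hpt := hext f g (eu i) hcu
    funext x
    by_cases hxP : x ∈ P i
    · apply hpt
      rw [hPmem] at hxP
      rw [mem_incTotal]
      rcases hxP with h | ⟨e, he, hmem', _⟩
      · subst h; simp
      · subst he; simpa using hmem'
    · exact hfg x hxP
  -- degree counting
  have hdegcard : ∀ z : V,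
      (Finset.univ.filter fun e : G.edgeSet => z ∈ (e : Sym2 V)).card = G.degree z := by
    intro z
    rw [← SimpleGraph.card_incidenceFinset_eq_degree]
    have himg : (Finset.univ.filter fun e : G.edgeSet => z ∈ (e : Sym2 V)).image Subtype.val
        = G.incidenceFinset z := by
      ext e
      simp only [Finset.mem_image, Finset.mem_filter, Finset.mem_univ, true_and,
        SimpleGraph.mem_incidenceFinset, SimpleGraph.incidenceSet, Set.mem_sep_iff]
      constructor
      · rintro ⟨e', he', rfl⟩; exact ⟨e'.prop, he'⟩
      · rintro ⟨he, hz⟩; exact ⟨⟨e, he⟩, hz, rfl⟩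
    rw [← himg, Finset.card_image_of_injective _ Subtype.val_injective]
  have hPcard : ∀ i, (P i).card = G.degree (eu i) := by
    intro i
    have h1 : Sum.inl (eu i) ∉
        ((Finset.univ.filter fun e : G.edgeSet => eu i ∈ (e : Sym2 V)).erase i).image
          Sum.inr := by simp
    have h2 : i ∈ (Finset.univ.filter fun e : G.edgeSet => eu i ∈ (e : Sym2 V)) := by
      simp [humem i]
    have h3 : 0 < G.degree (eu i) := by
      rw [SimpleGraph.degree_pos_iff_exists_adj]; exact ⟨ev i, hadj i⟩
    simp only [hP]
    rw [Finset.card_insert_of_notMem h1,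
      Finset.card_image_of_injective _ Sum.inr_injective,
      Finset.card_erase_of_mem h2, hdegcard]
    omega
  -- the probability
  set p : ℝ := ((2:ℝ) ^ G.minDegree)⁻¹ with hpdef
  have hppos : (0:ℝ) < 2 ^ G.minDegree := by positivity
  have hp : 0 ≤ p := by positivity
  -- conditional counting bound
  have hcond : ∀ (i : G.edgeSet) (S : Finset G.edgeSet), Disjoint S (Γ i) →
      ((A i ∩ (S.inf fun j => (A j)ᶜ)).card : ℝ)
        ≤ p * ((S.inf fun j => (A j)ᶜ).card) := by
    intro i S hdisjS
    set C := S.inf fun j => (A j)ᶜ with hC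
    have hCmem : ∀ g, g ∈ C ↔ ∀ j ∈ S, g ∉ A j := by
      intro g
      rw [hC, mem_finset_inf]
      simp [Finset.mem_compl]
    have hCinv : ∀ f g : (V ⊕ G.edgeSet) → Bool,
        (∀ x, x ∉ P i → f x = g x) → f ∈ C → g ∈ C := by
      intro f g hfg hf
      rw [hCmem] at hf ⊢
      intro j hj hg
      have hjΓ : j ∉ Γ i := fun h => (Finset.disjoint_left.mp hdisjS hj) h
      exact (hf j hj) ((hAinv i j hjΓ f g hfg).mpr hg)
    set fib : ((V ⊕ G.edgeSet) → Bool) → Finset ((V ⊕ G.edgeSet) → Bool) :=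
      fun f => Finset.univ.filter (fun g => ∀ x, x ∉ P i → g x = f x) with hfib
    have hfibsub : ∀ f ∈ A i ∩ C, fib f ⊆ C := by
      intro f hf g hg
      simp only [hfib, Finset.mem_filter, Finset.mem_univ, true_and] at hg
      exact hCinv f g (fun x hx => (hg x hx).symm) (Finset.mem_inter.mp hf).2
    have hfibdisj : ∀ f ∈ A i ∩ C, ∀ f' ∈ A i ∩ C, f ≠ f' → Disjoint (fib f) (fib f') := by
      intro f hf f' hf' hne'
      rw [Finset.disjoint_left]
      intro g hg hg'
      simp only [hfib, Finset.mem_filter, Finset.mem_univ, true_and] at hg hg'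
      apply hne'
      apply hrigid i f f' (Finset.mem_inter.mp hf).1 (Finset.mem_inter.mp hf').1
      intro x hx
      rw [← hg x hx, ← hg' x hx]
    have hfibcard : ∀ f, (fib f).card = 2 ^ (P i).card := by
      intro f
      have hb : (fib f).card = (Finset.univ : Finset ({x // x ∈ P i} → Bool)).card := by
        apply Finset.card_bij' (i := fun g _ => fun x : {x // x ∈ P i} => g x.1)
          (j := fun h _ => fun x => if hx : x ∈ P i then h ⟨x, hx⟩ else f x)
        · intro g hg; exact Finset.mem_univ _
        · intro h _
          simp only [hfib, Finset.mem_filter, Finset.mem_univ, true_and]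
          intro x hx
          rw [dif_neg hx]
        · intro g hg
          simp only [hfib, Finset.mem_filter, Finset.mem_univ, true_and] at hg
          funext x
          by_cases hx : x ∈ P i
          · rw [dif_pos hx]
          · rw [dif_neg hx]; exact (hg x hx).symm
        · intro h _
          funext x
          simp only [dif_pos x.2]
      rw [hb, Finset.card_univ]
      simp [Fintype.card_fun, Fintype.card_coe]
    have hcount : (A i ∩ C).card * 2 ^ G.degree (eu i) ≤ C.card := by
      rw [← hPcard i]
      calc (A i ∩ C).card * 2 ^ (P i).card
          = ∑ f ∈ (A i ∩ C), (fib f).card := by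
            rw [Finset.sum_congr rfl (fun f _ => hfibcard f), Finset.sum_const, smul_eq_mul]
        _ = ((A i ∩ C).biUnion fib).card := (Finset.card_biUnion hfibdisj).symm
        _ ≤ C.card := Finset.card_le_card (Finset.biUnion_subset.mpr hfibsub)
    have hdge : G.minDegree ≤ G.degree (eu i) := G.minDegree_le_degree _
    have h2 : (A i ∩ C).card * 2 ^ G.minDegree ≤ C.card :=
      le_trans (Nat.mul_le_mul_left _ (Nat.pow_le_pow_right (by norm_num) hdge)) hcount
    have h3 : ((A i ∩ C).card : ℝ) * 2 ^ G.minDegree ≤ (C.card : ℝ) := by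
      exact_mod_cast h2
    rw [hpdef, inv_mul_eq_div, le_div_iff₀ hppos]
    exact h3
  -- Γ facts
  have hmemΓ : ∀ i, i ∈ Γ i := by
    intro i
    simp only [hΓdef, Finset.mem_filter, Finset.mem_univ, true_and]
    exact ⟨eu i, humem i, Or.inl rfl⟩
  have hΓcard : ∀ i, (Γ i).card ≤ G.maxDegree * G.maxDegree - G.maxDegree + 1 := by
    intro i
    set edgeOf : V → G.edgeSet :=
      fun z => if h : G.Adj (eu i) z then ⟨s(eu i, z), h⟩ else i with hedgeOf
    have hsub : Γ i ⊆ (Finset.univ.filter fun j : G.edgeSet => eu i ∈ (j : Sym2 V)) ∪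
        ((G.neighborFinset (eu i)).erase (ev i)).biUnion
          (fun z => (Finset.univ.filter fun j : G.edgeSet => z ∈ (j : Sym2 V)).erase
            (edgeOf z)) := by
      intro j hj
      simp only [hΓdef, Finset.mem_filter, Finset.mem_univ, true_and] at hj
      obtain ⟨z, hzj, hz⟩ := hj
      rw [Finset.mem_union]
      by_cases hu : eu i ∈ (j : Sym2 V)
      · exact Or.inl (by simp [hu])
      · rcases hz with rfl | ⟨hadj', hzv⟩
        · exact absurd hzj hu
        · refine Or.inr (Finset.mem_biUnion.mpr ⟨z, ?_, ?_⟩)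
          · rw [Finset.mem_erase, SimpleGraph.mem_neighborFinset]; exact ⟨hzv, hadj'⟩
          · rw [Finset.mem_erase]
            refine ⟨?_, by simp [hzj]⟩
            intro hjeq
            apply hu
            rw [hjeq, hedgeOf]
            simp only [dif_pos hadj']
            exact Sym2.mem_mk_left _ _
    have hc1 : (Finset.univ.filter fun j : G.edgeSet => eu i ∈ (j : Sym2 V)).card
        ≤ G.maxDegree := by
      rw [hdegcard]; exact G.degree_le_maxDegree _
    have hc2 : ∀ z ∈ (G.neighborFinset (eu i)).erase (ev i),
        ((Finset.univ.filter fun j : G.edgeSet => z ∈ (j : Sym2 V)).erase (edgeOf z)).card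
          ≤ G.maxDegree - 1 := by
      intro z hz
      rw [Finset.mem_erase, SimpleGraph.mem_neighborFinset] at hz
      have hadj' : G.Adj (eu i) z := hz.2
      have hmemE : edgeOf z ∈ (Finset.univ.filter fun j : G.edgeSet => z ∈ (j : Sym2 V)) := by
        simp only [Finset.mem_filter, Finset.mem_univ, true_and, hedgeOf, dif_pos hadj']
        exact Sym2.mem_mk_right _ _
      rw [Finset.card_erase_of_mem hmemE, hdegcard]
      have := G.degree_le_maxDegree z
      omega
    have hnb : ((G.neighborFinset (eu i)).erase (ev i)).card ≤ G.maxDegree - 1 := by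
      have h1 : (ev i) ∈ G.neighborFinset (eu i) := by
        rw [SimpleGraph.mem_neighborFinset]; exact hadj i
      rw [Finset.card_erase_of_mem h1]
      have h2 : (G.neighborFinset (eu i)).card ≤ G.maxDegree := by
        rw [SimpleGraph.card_neighborFinset_eq_degree]; exact G.degree_le_maxDegree _
      omega
    have hbu : (((G.neighborFinset (eu i)).erase (ev i)).biUnion
        (fun z => (Finset.univ.filter fun j : G.edgeSet => z ∈ (j : Sym2 V)).erase
          (edgeOf z))).card ≤ (G.maxDegree - 1) * (G.maxDegree - 1) := by
      calc _ ≤ ∑ z ∈ (G.neighborFinset (eu i)).erase (ev i),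
            ((Finset.univ.filter fun j : G.edgeSet => z ∈ (j : Sym2 V)).erase
              (edgeOf z)).card := Finset.card_biUnion_le
        _ ≤ ((G.neighborFinset (eu i)).erase (ev i)).card • (G.maxDegree - 1) :=
            Finset.sum_le_card_nsmul _ _ _ hc2
        _ ≤ (G.maxDegree - 1) * (G.maxDegree - 1) := by
            rw [smul_eq_mul]
            exact Nat.mul_le_mul_right _ hnb
    have harith : G.maxDegree + (G.maxDegree - 1) * (G.maxDegree - 1)
        ≤ G.maxDegree * G.maxDegree - G.maxDegree + 1 := by
      obtain ⟨m, hm⟩ : ∃ m, G.maxDegree = m + 2 := ⟨G.maxDegree - 2, by omega⟩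
      rw [hm]
      have e1 : (m + 2 - 1) * (m + 2 - 1) = m * m + 2 * m + 1 := by
        have h21 : m + 2 - 1 = m + 1 := by omega
        rw [h21]; ring
      have e2 : (m + 2) * (m + 2) = m * m + 4 * m + 4 := by ring
      omega
    calc (Γ i).card ≤ _ := Finset.card_le_card hsub
      _ ≤ _ := Finset.card_union_le _ _
      _ ≤ G.maxDegree + (G.maxDegree - 1) * (G.maxDegree - 1) := add_le_add hc1 hbu
      _ ≤ G.maxDegree * G.maxDegree - G.maxDegree + 1 := harith
  -- numerics
  set D : ℕ := G.maxDegree * G.maxDegree - G.maxDegree with hD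
  have hD1 : 1 ≤ D := by
    have h1 : 2 * G.maxDegree ≤ G.maxDegree * G.maxDegree :=
      Nat.mul_le_mul_right _ hΔ2
    omega
  have hcast : ((D : ℕ) : ℝ) + 1 = (G.maxDegree:ℝ)^2 - G.maxDegree + 1 := by
    have h1 : G.maxDegree ≤ G.maxDegree * G.maxDegree :=
      Nat.le_mul_of_pos_left _ (by omega)
    rw [hD, Nat.cast_sub h1]
    push_cast
    ring
  have hXpos : (0:ℝ) < Real.exp 1 * ((G.maxDegree:ℝ)^2 - (G.maxDegree:ℝ) + 1) := by
    have h1 := Real.exp_pos 1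
    have h2 : (0:ℝ) ≤ (G.maxDegree:ℝ) := Nat.cast_nonneg _
    nlinarith [sq_nonneg ((G.maxDegree:ℝ) - 1)]
  have hXlt : Real.exp 1 * ((G.maxDegree:ℝ)^2 - (G.maxDegree:ℝ) + 1)
      < (2:ℝ) ^ G.minDegree := by
    have h1 := (Real.logb_lt_iff_lt_rpow (by norm_num) hXpos).mp hδ
    rwa [Real.rpow_natCast] at h1
  have hpe : Real.exp 1 * p * ((D:ℝ) + 1) ≤ 1 := by
    have h1 : Real.exp 1 * ((D:ℝ) + 1) ≤ (2:ℝ) ^ G.minDegree := by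
      rw [hcast]; exact hXlt.le
    calc Real.exp 1 * p * ((D:ℝ) + 1) = (Real.exp 1 * ((D:ℝ) + 1)) * p := by ring
      _ ≤ (2:ℝ) ^ G.minDegree * p := mul_le_mul_of_nonneg_right h1 hp
      _ = 1 := by rw [hpdef]; field_simp
  -- apply the local lemma
  obtain ⟨f, hf⟩ := counting_LLL A Γ hmemΓ D hD1 (fun i => hΓcard i) p hp hpe hcond
  refine ⟨wt f, ?_, ?_⟩
  · intro x; by_cases h : f x <;> simp [hwt, h]
  · intro a b hab heq
    set i : G.edgeSet := ⟨s(a,b), G.mem_edgeSet.mpr hab⟩ with hi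
    have h1 := hf i
    simp only [hA, Finset.mem_filter, Finset.mem_univ, true_and] at h1
    apply h1
    have h2 : s(eu i, ev i) = s(a, b) := by rw [hmk i]
    rw [Sym2.eq_iff] at h2
    rcases h2 with ⟨h3, h4⟩ | ⟨h3, h4⟩
    · rw [h3, h4]; exact heq
    · rw [h3, h4]; exact heq.symm

/-- If `G` has girth at least `5` and `δ(G) > log₂(e·(Δ(G)² − Δ(G) + 1))`, then
`χ_σ^t(G) ≤ 2`. -/
theorem stmt_14 [Fintype V] [DecidableEq V] (G : SimpleGraph V) [DecidableRel G.Adj]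
    (hgirth : 5 ≤ G.egirth)
    (hδ : Real.logb 2 (Real.exp 1 * ((G.maxDegree : ℝ) ^ 2 - (G.maxDegree : ℝ) + 1))
      < (G.minDegree : ℝ))
    (σ : LinearOrder (V ⊕ G.edgeSet)) :
    ∃ w : V ⊕ G.edgeSet → ℝ, (∀ x, w x ∈ ({1, 2} : Set ℝ)) ∧ ProperTotalSeq G σ w := by
  obtain ⟨w, h1, h2⟩ := stmt_14' G hδ σ
  exact ⟨w, h1, fun u v h => h2 u v h⟩
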